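/- Let D be an integral domain with fraction field K and let A ∈ D^{n×n} admit a permutation-free LD⁻¹U decomposition A = L · D_g^{−1} · U. Then for all indices 1 ≤ k ≤ j ≤ n, the entry U_{kj} equals the determinant of the k×k matrix whose first k−1 columns are the entries A_{s,t} for 1 ≤ s ≤ k, 1 ≤ t ≤ k−1, and whose last column is (A_{1,j}, …, A_{k,j}); that is, U_{kj} is the k×k minor of A taken from rows 1,…,k and columns 1,…,k−1,j. -/

import Mathlib

/-- The diagonal matrix `D_g = diag(p₁, p₁p₂, p₂p₃, …, p_{n−1}p_n)` built from the
pivots `p : Fin n → D`. -/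
def bareissDiag {D : Type*} [CommRing D] {n : ℕ} (p : Fin n → D) :
    Matrix (Fin n) (Fin n) D :=
  Matrix.diagonal fun i =>
    (if (i : ℕ) = 0 then 1
      else p ⟨(i : ℕ) - 1, lt_of_le_of_lt (Nat.sub_le _ _) i.isLt⟩) * p i

/-- In a permutation-free `L D⁻¹ U` decomposition `A = L · D_g⁻¹ · U`
over the fraction field, for `k ≤ j` the entry `U k j` is the minor of `A` formed from
rows `0, …, k` and columns `0, …, k-1, j` (0-indexed). -/
theorem stmt2 {D K : Type*} [CommRing D] [IsDomain D] [Field K] [Algebra D K]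
    [IsFractionRing D K] {n : ℕ} (A L U : Matrix (Fin n) (Fin n) D)
    (hL : ∀ i j : Fin n, (i : ℕ) < (j : ℕ) → L i j = 0)
    (hU : ∀ i j : Fin n, (j : ℕ) < (i : ℕ) → U i j = 0)
    (hdiag : ∀ i : Fin n, U i i = L i i)
    (hp : ∀ i : Fin n, L i i ≠ 0)
    (hA : A.map (algebraMap D K) =
      L.map (algebraMap D K) *
        ((bareissDiag fun i : Fin n => L i i).map (algebraMap D K))⁻¹ *
        U.map (algebraMap D K))
    (k j : Fin n) (hkj : k ≤ j) :
    U k j = (Matrix.of fun s t : Fin ((k : ℕ) + 1) =>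
      A (Fin.castLE k.isLt s)
        (if (t : ℕ) < (k : ℕ) then Fin.castLE k.isLt t else j)).det := by
  set f : D →+* K := algebraMap D K with hfdef
  have hinj : Function.Injective f := IsFractionRing.injective D K
  set c : Fin ((k : ℕ) + 1) → Fin n := Fin.castLE k.isLt with hc
  set P : Fin n → K := fun i => f (L i i) with hP
  have hPne : ∀ i, P i ≠ 0 := by
    intro i h
    exact hp i (hinj (h.trans (map_zero f).symm))
  set d : Fin n → K := fun i =>
    (if (i : ℕ) = 0 then 1
      else P ⟨(i : ℕ) - 1, lt_of_le_of_lt (Nat.sub_le _ _) i.isLt⟩) * P i with hd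
  have hdne : ∀ i, d i ≠ 0 := by
    intro i
    apply mul_ne_zero _ (hPne i)
    split
    · exact one_ne_zero
    · exact hPne _
  -- the inverse of the mapped diagonal matrix
  have hDinv : ((bareissDiag fun i : Fin n => L i i).map f)⁻¹
      = Matrix.diagonal fun i => (d i)⁻¹ := by
    apply Matrix.inv_eq_right_inv
    rw [bareissDiag, Matrix.diagonal_map (map_zero f), Matrix.diagonal_mul_diagonal,
      ← Matrix.diagonal_one]
    refine congrArg Matrix.diagonal (funext fun i => ?_)
    have hfd : f ((if (i : ℕ) = 0 then 1
        else L ⟨(i : ℕ) - 1, lt_of_le_of_lt (Nat.sub_le _ _) i.isLt⟩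
          ⟨(i : ℕ) - 1, lt_of_le_of_lt (Nat.sub_le _ _) i.isLt⟩) * L i i) = d i := by
      rw [hd, map_mul, apply_ite f, map_one]
    simp only [Function.comp_apply, hfd, Pi.one_apply]
    exact mul_inv_cancel₀ (hdne i)
  -- entrywise decomposition
  have hentry : ∀ s t : Fin n,
      f (A s t) = ∑ i : Fin n, f (L s i) * (d i)⁻¹ * f (U i t) := by
    intro s t
    have h := congrFun (congrFun hA s) t
    rw [hDinv] at h
    rw [Matrix.mul_apply] at h
    simpa only [Matrix.mul_diagonal, Matrix.map_apply] using h
  -- restrict the sum to the first k+1 indices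
  have hrow : ∀ (s : Fin ((k : ℕ) + 1)) (t : Fin n),
      f (A (c s) t) = ∑ i : Fin ((k : ℕ) + 1),
        f (L (c s) (c i)) * (d (c i))⁻¹ * f (U (c i) t) := by
    intro s t
    rw [hentry]
    have hmap : ∑ i : Fin ((k : ℕ) + 1),
        f (L (c s) (c i)) * (d (c i))⁻¹ * f (U (c i) t)
        = ∑ i ∈ Finset.univ.map (Fin.castLEEmb k.isLt),
            f (L (c s) i) * (d i)⁻¹ * f (U i t) := by
      rw [Finset.sum_map]
      rfl
    rw [hmap]
    apply (Finset.sum_subset (Finset.subset_univ _) _).symm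
    intro x _ hx
    have hxk : (k : ℕ) < (x : ℕ) := by
      by_contra hle
      push_neg at hle
      exact hx (Finset.mem_map.mpr ⟨⟨(x : ℕ), Nat.lt_succ_of_le hle⟩,
        Finset.mem_univ _, Fin.ext rfl⟩)
    have hcs : L (c s) x = 0 := by
      apply hL
      have hs : (s : ℕ) < (k : ℕ) + 1 := s.isLt
      simp only [hc, Fin.coe_castLE]
      omega
    rw [hcs, map_zero, zero_mul, zero_mul]
  -- the restricted matrices
  set col : Fin ((k : ℕ) + 1) → Fin n := fun t => if (t : ℕ) < (k : ℕ) then c t else j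
    with hcol
  set L' : Matrix (Fin ((k : ℕ) + 1)) (Fin ((k : ℕ) + 1)) K :=
    Matrix.of fun s t => f (L (c s) (c t)) with hL'
  set U' : Matrix (Fin ((k : ℕ) + 1)) (Fin ((k : ℕ) + 1)) K :=
    Matrix.of fun s t => f (U (c s) (col t)) with hU'
  have hMdec : (Matrix.of fun s t : Fin ((k : ℕ) + 1) =>
      A (c s) (if (t : ℕ) < (k : ℕ) then c t else j)).map f
      = L' * Matrix.diagonal (fun i => (d (c i))⁻¹) * U' := by
    ext s t
    rw [Matrix.mul_apply]
    simp only [Matrix.mul_diagonal, Matrix.map_apply, Matrix.of_apply, hL', hU']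
    exact hrow s (col t)
  have htL : L'.BlockTriangular OrderDual.toDual := by
    intro a b hab
    have hba : (a : ℕ) < (b : ℕ) := hab
    show f (L (c a) (c b)) = 0
    rw [hL _ _ (by simpa [hc] using hba), map_zero]
  have htU : U'.BlockTriangular id := by
    intro a b hab
    have hba : (b : ℕ) < (a : ℕ) := hab
    have hbk : (b : ℕ) < (k : ℕ) := lt_of_lt_of_le hba (Nat.lt_succ_iff.mp a.isLt)
    show f (U (c a) (col b)) = 0
    rw [hcol]
    simp only [if_pos hbk]
    rw [hU _ _ (by simpa [hc] using hba), map_zero]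
  have hdetL' : L'.det = ∏ i, P (c i) := by
    rw [Matrix.det_of_lowerTriangular L' htL]
    rfl
  have hdetU' : U'.det = (∏ i : Fin (k : ℕ), P (c i.castSucc)) * f (U k j) := by
    rw [Matrix.det_of_upperTriangular htU, Fin.prod_univ_castSucc]
    congr 1
    · refine Finset.prod_congr rfl fun i _ => ?_
      have hik : ((i.castSucc : Fin ((k : ℕ) + 1)) : ℕ) < (k : ℕ) := i.isLt
      show f (U (c i.castSucc) (col i.castSucc)) = P (c i.castSucc)
      rw [hcol]
      simp only [if_pos hik]
      rw [hdiag]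
    · have h1 : ¬ ((Fin.last (k : ℕ) : ℕ) < (k : ℕ)) := by simp
      have h2 : c (Fin.last (k : ℕ)) = k := by
        apply Fin.ext
        simp [hc]
      show f (U (c (Fin.last (k : ℕ))) (col (Fin.last (k : ℕ)))) = f (U k j)
      rw [hcol]
      simp only [if_neg h1, h2]
  have hprod : ∏ i : Fin ((k : ℕ) + 1), d (c i)
      = (∏ i : Fin (k : ℕ), P (c i.castSucc)) * ∏ i : Fin ((k : ℕ) + 1), P (c i) := by
    have hterm : ∀ i : Fin ((k : ℕ) + 1), d (c i) =
        (if (i : ℕ) = 0 then 1 else P (c ⟨(i : ℕ) - 1, by omega⟩)) * P (c i) := by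
      intro i
      rfl
    rw [Finset.prod_congr rfl fun i _ => hterm i, Finset.prod_mul_distrib]
    congr 1
    rw [Fin.prod_univ_succ]
    have h0 : ((0 : Fin ((k : ℕ) + 1)) : ℕ) = 0 := rfl
    rw [if_pos h0, one_mul]
    refine Finset.prod_congr rfl fun i _ => ?_
    rw [if_neg (by simp [Fin.val_succ])]
    rfl
  have hXne : (∏ i : Fin ((k : ℕ) + 1), P (c i)) ≠ 0 :=
    Finset.prod_ne_zero_iff.mpr fun i _ => hPne _
  have hYne : (∏ i : Fin (k : ℕ), P (c i.castSucc)) ≠ 0 :=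
    Finset.prod_ne_zero_iff.mpr fun i _ => hPne _
  apply hinj
  rw [RingHom.map_det, RingHom.mapMatrix_apply, hMdec, Matrix.det_mul, Matrix.det_mul, hdetL', hdetU',
    Matrix.det_diagonal]
  rw [Finset.prod_inv_distrib, hprod]
  field_simp
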